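/- Let N be a positive integer, let K and K̃ be N×N real symmetric positive semidefinite matrices; let λ > 0; let k, k̃ ∈ ℝ^N satisfy |k̃ᵢ − kᵢ| ≤ ε̃ for every index i, where ε̃ ≥ 0; let c, c̃ ∈ ℝ satisfy |c − c̃| ≤ ε̃; let y ∈ ℝ^N, let f ∈ ℝ, let B, R ≥ 0 and δ ∈ (0,1). Define μ := kᵀ(K + λI)⁻¹ y and μ̃ := k̃ᵀ(K̃ + λI)⁻¹ y, σ² := c − kᵀ(K + λI)⁻¹ k and σ̃² := c̃ − k̃ᵀ(K̃ + λI)⁻¹ k̃, W := √(N + 2√N·√(log(1/δ)) + 2·log(1/δ)), C := (1/λ + ‖(K + λI)⁻¹‖)·(‖k‖ + √N·ε̃) + ‖(K + λI)⁻¹‖·√N·ε̃, and S² := ε̃ + √N·ε̃·‖(K + λI)⁻¹ k‖ + (√N·ε̃ + ‖k‖)·C. Assume σ̃² ≥ 0. If |μ̃ − f| ≤ B·√(σ̃²) + R·‖(K̃ + λI)⁻¹ k̃‖·W, then |μ − f| ≤ B·√(σ² + S²) + C·‖y‖ + R·(‖(K + λI)⁻¹ k‖ + C)·W. -/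

import Mathlib

open Matrix MeasureTheory

/-- Operator norm of an `N × N` real matrix induced by the Euclidean norm on `ℝ^N`. -/
noncomputable def opNorm {N : ℕ} (M : Matrix (Fin N) (Fin N) ℝ) : ℝ :=
  ‖Matrix.toEuclideanCLM (𝕜 := ℝ) M‖

/-- Euclidean norm of a vector in `ℝ^N`. -/
noncomputable def evnorm {N : ℕ} (v : Fin N → ℝ) : ℝ :=
  Real.sqrt (∑ i, (v i) ^ 2)

/-- The constant `C = (1/λ + ‖(K+λI)⁻¹‖)(‖k‖ + √N ε̃) + ‖(K+λI)⁻¹‖ √N ε̃`. -/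
noncomputable def Cbound {N : ℕ} (K : Matrix (Fin N) (Fin N) ℝ) (k : Fin N → ℝ)
    (lam ε : ℝ) : ℝ :=
  (1 / lam + opNorm (K + lam • 1)⁻¹) * (evnorm k + Real.sqrt N * ε) +
    opNorm (K + lam • 1)⁻¹ * (Real.sqrt N * ε)

/-- The constant `S² = ε̃ + √N ε̃ ‖(K+λI)⁻¹ k‖ + (√N ε̃ + ‖k‖) C`. -/
noncomputable def Ssq {N : ℕ} (K : Matrix (Fin N) (Fin N) ℝ) (k : Fin N → ℝ)
    (lam ε : ℝ) : ℝ :=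
  ε + Real.sqrt N * ε * evnorm ((K + lam • 1)⁻¹ *ᵥ k) +
    (Real.sqrt N * ε + evnorm k) * Cbound K k lam ε

section helpers
variable {N : ℕ}

lemma evnorm_eq (v : Fin N → ℝ) :
    evnorm v = ‖(WithLp.equiv 2 (Fin N → ℝ)).symm v‖ := by
  rw [EuclideanSpace.norm_eq]
  simp [evnorm, Real.norm_eq_abs, sq_abs]

lemma evnorm_nonneg (v : Fin N → ℝ) : 0 ≤ evnorm v := Real.sqrt_nonneg _

lemma dot_abs_le (v w : Fin N → ℝ) : |v ⬝ᵥ w| ≤ evnorm v * evnorm w := by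
  have h := abs_real_inner_le_norm ((WithLp.equiv 2 (Fin N → ℝ)).symm v)
    ((WithLp.equiv 2 (Fin N → ℝ)).symm w)
  rw [← evnorm_eq, ← evnorm_eq] at h
  have : (inner ℝ ((WithLp.equiv 2 (Fin N → ℝ)).symm v)
      ((WithLp.equiv 2 (Fin N → ℝ)).symm w) : ℝ) = v ⬝ᵥ w := by
    rw [PiLp.inner_apply]
    simp [dotProduct, RCLike.inner_apply, mul_comm]
  rwa [this] at h

lemma evnorm_add_le (v w : Fin N → ℝ) : evnorm (v + w) ≤ evnorm v + evnorm w := by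
  rw [evnorm_eq, evnorm_eq, evnorm_eq, WithLp.equiv_symm_apply, WithLp.toLp_add]
  exact norm_add_le _ _

lemma evnorm_sub_rev (v w : Fin N → ℝ) : evnorm (v - w) = evnorm (w - v) := by
  rw [evnorm_eq, evnorm_eq, WithLp.equiv_symm_apply, WithLp.toLp_sub, WithLp.toLp_sub]
  exact norm_sub_rev _ _

lemma evnorm_mulVec_le (M : Matrix (Fin N) (Fin N) ℝ) (v : Fin N → ℝ) :
    evnorm (M *ᵥ v) ≤ opNorm M * evnorm v := by
  rw [evnorm_eq, evnorm_eq, show M *ᵥ v = Matrix.toLin' M v from rfl,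
    WithLp.equiv_symm_apply, toLin'_apply, ← Matrix.toEuclideanCLM_toLp]
  exact (Matrix.toEuclideanCLM (𝕜 := ℝ) M).le_opNorm _

lemma evnorm_sq (v : Fin N → ℝ) : v ⬝ᵥ v = evnorm v ^ 2 := by
  rw [evnorm, Real.sq_sqrt (by positivity)]
  simp [dotProduct, sq]

lemma posdef_shift {K : Matrix (Fin N) (Fin N) ℝ} (hs : K.IsSymm)
    (hp : ∀ v, 0 ≤ v ⬝ᵥ K *ᵥ v) {lam : ℝ} (hlam : 0 < lam) :
    (K + lam • 1).PosDef := by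
  rw [posDef_iff_dotProduct_mulVec]
  constructor
  · rw [Matrix.IsHermitian, conjTranspose_eq_transpose_of_trivial, transpose_add,
      transpose_smul, transpose_one, hs.eq]
  · intro x hx
    have h1 : x ⬝ᵥ ((K + lam • 1) *ᵥ x) = x ⬝ᵥ (K *ᵥ x) + lam * (x ⬝ᵥ x) := by
      rw [add_mulVec, dotProduct_add, smul_mulVec, one_mulVec, dotProduct_smul,
        smul_eq_mul]
    have h2 : 0 < x ⬝ᵥ x := by
      have hnn : 0 ≤ x ⬝ᵥ x := by rw [evnorm_sq]; positivity
      have hne : x ⬝ᵥ x ≠ 0 := fun h => hx (dotProduct_self_eq_zero.mp h)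
      exact lt_of_le_of_ne hnn (Ne.symm hne)
    have := hp x
    simp only [star_trivial]
    rw [h1]
    nlinarith

lemma shift_isUnit_det {K : Matrix (Fin N) (Fin N) ℝ} (hs : K.IsSymm)
    (hp : ∀ v, 0 ≤ v ⬝ᵥ K *ᵥ v) {lam : ℝ} (hlam : 0 < lam) :
    IsUnit (K + lam • 1).det :=
  (Matrix.isUnit_iff_isUnit_det _).mp (posdef_shift hs hp hlam).isUnit

lemma inv_mulVec_norm_le {K : Matrix (Fin N) (Fin N) ℝ} (hs : K.IsSymm)
    (hp : ∀ v, 0 ≤ v ⬝ᵥ K *ᵥ v) {lam : ℝ} (hlam : 0 < lam) (w : Fin N → ℝ) :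
    lam * evnorm ((K + lam • 1)⁻¹ *ᵥ w) ≤ evnorm w := by
  set v := (K + lam • 1)⁻¹ *ᵥ w with hv
  have hAv : (K + lam • 1) *ᵥ v = w := by
    rw [hv, mulVec_mulVec, Matrix.mul_nonsing_inv _ (shift_isUnit_det hs hp hlam), one_mulVec]
  have h1 : lam * (v ⬝ᵥ v) ≤ v ⬝ᵥ w := by
    rw [← hAv, add_mulVec, dotProduct_add, smul_mulVec, one_mulVec, dotProduct_smul,
      smul_eq_mul]
    nlinarith [hp v]
  have h2 : v ⬝ᵥ w ≤ evnorm v * evnorm w := le_trans (le_abs_self _) (dot_abs_le v w)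
  have h3 : lam * evnorm v ^ 2 ≤ evnorm v * evnorm w := by rw [← evnorm_sq]; linarith
  rcases eq_or_lt_of_le (evnorm_nonneg v) with h | h
  · rw [← h]; simpa using evnorm_nonneg w
  · nlinarith

lemma dot_inv_mulVec {K : Matrix (Fin N) (Fin N) ℝ} (hs : K.IsSymm) {lam : ℝ}
    (v w : Fin N → ℝ) :
    v ⬝ᵥ ((K + lam • 1)⁻¹ *ᵥ w) = ((K + lam • 1)⁻¹ *ᵥ v) ⬝ᵥ w := by
  have hsymm : ((K + lam • 1)⁻¹)ᵀ = (K + lam • 1)⁻¹ := by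
    rw [Matrix.transpose_nonsing_inv]
    congr 1
    rw [transpose_add, transpose_smul, transpose_one, hs.eq]
  rw [dotProduct_mulVec, ← mulVec_transpose, hsymm]

end helpers

theorem stmt_11 {N : ℕ} (hN : 0 < N) (K Kt : Matrix (Fin N) (Fin N) ℝ)
    (hKsymm : K.IsSymm) (hKtsymm : Kt.IsSymm)
    (hKpsd : ∀ v : Fin N → ℝ, 0 ≤ v ⬝ᵥ K *ᵥ v)
    (hKtpsd : ∀ v : Fin N → ℝ, 0 ≤ v ⬝ᵥ Kt *ᵥ v)
    (lam : ℝ) (hlam : 0 < lam) (ε : ℝ) (hε : 0 ≤ ε)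
    (k kt : Fin N → ℝ) (hk : ∀ i, |kt i - k i| ≤ ε)
    (c ct : ℝ) (hc : |c - ct| ≤ ε)
    (y : Fin N → ℝ) (f : ℝ) (B R : ℝ) (hB : 0 ≤ B) (hR : 0 ≤ R)
    (δ : ℝ) (hδ : δ ∈ Set.Ioo (0 : ℝ) 1)
    (hvar : 0 ≤ ct - kt ⬝ᵥ ((Kt + lam • 1)⁻¹ *ᵥ kt))
    (hbound : |kt ⬝ᵥ ((Kt + lam • 1)⁻¹ *ᵥ y) - f| ≤
      B * Real.sqrt (ct - kt ⬝ᵥ ((Kt + lam • 1)⁻¹ *ᵥ kt)) +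
        R * evnorm ((Kt + lam • 1)⁻¹ *ᵥ kt) *
          Real.sqrt (N + 2 * Real.sqrt N * Real.sqrt (Real.log (1 / δ)) +
            2 * Real.log (1 / δ))) :
    |k ⬝ᵥ ((K + lam • 1)⁻¹ *ᵥ y) - f| ≤
      B * Real.sqrt ((c - k ⬝ᵥ ((K + lam • 1)⁻¹ *ᵥ k)) + Ssq K k lam ε) +
        Cbound K k lam ε * evnorm y +
        R * (evnorm ((K + lam • 1)⁻¹ *ᵥ k) + Cbound K k lam ε) *
          Real.sqrt (N + 2 * Real.sqrt N * Real.sqrt (Real.log (1 / δ)) +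
            2 * Real.log (1 / δ)) := by
  set W := Real.sqrt (N + 2 * Real.sqrt N * Real.sqrt (Real.log (1 / δ)) +
      2 * Real.log (1 / δ)) with hWdef
  have hW : 0 ≤ W := Real.sqrt_nonneg _
  set u := (K + lam • 1)⁻¹ *ᵥ k with hu
  set ut := (Kt + lam • 1)⁻¹ *ᵥ kt with hut
  set C := Cbound K k lam ε with hCdef
  -- basic norm facts
  have hop : (0:ℝ) ≤ opNorm (K + lam • 1)⁻¹ := norm_nonneg _
  have hsN : (0:ℝ) ≤ Real.sqrt N := Real.sqrt_nonneg _
  -- ‖kt - k‖ ≤ √N ε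
  have hktk : evnorm (kt - k) ≤ Real.sqrt N * ε := by
    have h1 : Real.sqrt N * ε = Real.sqrt (N * ε ^ 2) := by
      rw [Real.sqrt_mul (Nat.cast_nonneg N), Real.sqrt_sq hε]
    rw [h1, evnorm]
    apply Real.sqrt_le_sqrt
    calc ∑ i, ((kt - k) i) ^ 2 ≤ ∑ _i : Fin N, ε ^ 2 := by
          refine Finset.sum_le_sum fun i _ => ?_
          have h := abs_le.mp (hk i)
          simp only [Pi.sub_apply]
          nlinarith [h.1, h.2]
      _ = N * ε ^ 2 := by simp [Finset.sum_const, mul_comm]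
  -- ‖kt‖ ≤ ‖k‖ + √N ε
  have hktn : evnorm kt ≤ evnorm k + Real.sqrt N * ε := by
    have := evnorm_add_le k (kt - k)
    simp only [add_sub_cancel] at this
    exact this.trans (by linarith [hktk])
  -- ‖ut‖ ≤ (1/lam) ‖kt‖
  have hutn : evnorm ut ≤ (1 / lam) * evnorm kt := by
    have := inv_mulVec_norm_le hKtsymm hKtpsd hlam kt
    rw [← hut] at this
    rw [div_mul_eq_mul_div, le_div_iff₀ hlam]
    linarith
  -- ‖u‖ ≤ ‖A⁻¹‖ ‖k‖
  have hun : evnorm u ≤ opNorm (K + lam • 1)⁻¹ * evnorm k := evnorm_mulVec_le _ k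
  have hlam' : 0 < 1 / lam := by positivity
  -- ‖ut - u‖ ≤ C
  have hd : evnorm (ut - u) ≤ C := by
    have h1 : evnorm (ut - u) ≤ evnorm ut + evnorm u := by
      have := evnorm_add_le ut (-u)
      simpa [sub_eq_add_neg, evnorm_sub_rev, show evnorm (-u) = evnorm (0 - u) by
        simp [sub_eq_add_neg]] using this.trans
        (by
          have : evnorm (-u) = evnorm u := by
            have h := evnorm_sub_rev (0 : Fin N → ℝ) u
            simpa using h
          linarith)
    have h2 : evnorm ut ≤ (1/lam) * (evnorm k + Real.sqrt N * ε) := by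
      calc evnorm ut ≤ (1/lam) * evnorm kt := hutn
        _ ≤ (1/lam) * (evnorm k + Real.sqrt N * ε) := by
            exact mul_le_mul_of_nonneg_left hktn (le_of_lt hlam')
    rw [hCdef, Cbound]
    have hkn : 0 ≤ evnorm k := evnorm_nonneg _
    nlinarith [mul_nonneg hop (mul_nonneg hsN hε), mul_nonneg hop hkn]
  have hC0 : 0 ≤ C := le_trans (evnorm_nonneg _) hd
  -- mean identities
  have hmu : k ⬝ᵥ ((K + lam • 1)⁻¹ *ᵥ y) = u ⬝ᵥ y := dot_inv_mulVec hKsymm k y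
  have hmut : kt ⬝ᵥ ((Kt + lam • 1)⁻¹ *ᵥ y) = ut ⬝ᵥ y := dot_inv_mulVec hKtsymm kt y
  -- |μ - μ̃| ≤ C ‖y‖
  have hmudiff : |u ⬝ᵥ y - ut ⬝ᵥ y| ≤ C * evnorm y := by
    have h1 : u ⬝ᵥ y - ut ⬝ᵥ y = (u - ut) ⬝ᵥ y := by rw [sub_dotProduct]
    rw [h1]
    calc |(u - ut) ⬝ᵥ y| ≤ evnorm (u - ut) * evnorm y := dot_abs_le _ _
      _ ≤ C * evnorm y := by
          rw [evnorm_sub_rev]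
          exact mul_le_mul_of_nonneg_right hd (evnorm_nonneg _)
  -- variance comparison
  have hvar2 : ct - kt ⬝ᵥ ((Kt + lam • 1)⁻¹ *ᵥ kt) ≤
      (c - k ⬝ᵥ ((K + lam • 1)⁻¹ *ᵥ k)) + Ssq K k lam ε := by
    have e1 : k ⬝ᵥ ((K + lam • 1)⁻¹ *ᵥ k) = k ⬝ᵥ u := rfl
    have e2 : kt ⬝ᵥ ((Kt + lam • 1)⁻¹ *ᵥ kt) = kt ⬝ᵥ ut := rfl
    rw [e1, e2, Ssq]
    have h1 : |(k - kt) ⬝ᵥ u| ≤ Real.sqrt N * ε * evnorm u := by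
      calc |(k - kt) ⬝ᵥ u| ≤ evnorm (k - kt) * evnorm u := dot_abs_le _ _
        _ ≤ Real.sqrt N * ε * evnorm u := by
            rw [evnorm_sub_rev]
            exact mul_le_mul_of_nonneg_right hktk (evnorm_nonneg _)
    have h2 : |kt ⬝ᵥ (ut - u)| ≤ (Real.sqrt N * ε + evnorm k) * C := by
      calc |kt ⬝ᵥ (ut - u)| ≤ evnorm kt * evnorm (ut - u) := dot_abs_le _ _
        _ ≤ (Real.sqrt N * ε + evnorm k) * C := by
            apply mul_le_mul (by linarith) hd (evnorm_nonneg _)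
              (by linarith [evnorm_nonneg k, mul_nonneg hsN hε])
    have h3 : k ⬝ᵥ u - kt ⬝ᵥ ut = (k - kt) ⬝ᵥ u - kt ⬝ᵥ (ut - u) := by
      rw [sub_dotProduct, dotProduct_sub]; ring
    have hc' := abs_le.mp hc
    have h1' := abs_le.mp h1
    have h2' := abs_le.mp h2
    rw [← hu]
    linarith [h3, h1'.2, h2'.1, hc'.1]
  have hsqrt : Real.sqrt (ct - kt ⬝ᵥ ((Kt + lam • 1)⁻¹ *ᵥ kt)) ≤
      Real.sqrt ((c - k ⬝ᵥ ((K + lam • 1)⁻¹ *ᵥ k)) + Ssq K k lam ε) :=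
    Real.sqrt_le_sqrt hvar2
  -- ‖ut‖ ≤ ‖u‖ + C
  have hutu : evnorm ut ≤ evnorm u + C := by
    have h1 := evnorm_add_le u (ut - u)
    simp only [add_sub_cancel] at h1
    linarith
  -- final assembly
  have htri : |u ⬝ᵥ y - f| ≤ |ut ⬝ᵥ y - f| + |u ⬝ᵥ y - ut ⬝ᵥ y| := by
    have := abs_sub_le (u ⬝ᵥ y) (ut ⬝ᵥ y) f
    linarith [abs_sub_le (u ⬝ᵥ y) (ut ⬝ᵥ y) f]
  rw [hmu]
  rw [hmut] at hbound
  have hB1 : B * Real.sqrt (ct - kt ⬝ᵥ ((Kt + lam • 1)⁻¹ *ᵥ kt)) ≤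
      B * Real.sqrt ((c - k ⬝ᵥ ((K + lam • 1)⁻¹ *ᵥ k)) + Ssq K k lam ε) :=
    mul_le_mul_of_nonneg_left hsqrt hB
  have hR1 : R * evnorm ((Kt + lam • 1)⁻¹ *ᵥ kt) * W ≤
      R * (evnorm ((K + lam • 1)⁻¹ *ᵥ k) + C) * W := by
    apply mul_le_mul_of_nonneg_right _ hW
    exact mul_le_mul_of_nonneg_left (by rw [← hut, ← hu]; exact hutu) hR
  calc |u ⬝ᵥ y - f| ≤ |ut ⬝ᵥ y - f| + |u ⬝ᵥ y - ut ⬝ᵥ y| := htri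
    _ ≤ (B * Real.sqrt (ct - kt ⬝ᵥ ((Kt + lam • 1)⁻¹ *ᵥ kt)) +
          R * evnorm ((Kt + lam • 1)⁻¹ *ᵥ kt) * W) + C * evnorm y := by
        rw [← hut]
        exact add_le_add hbound hmudiff
    _ ≤ _ := by
        rw [← hu, ← hut] at hB1 hR1
        linarith
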